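/- In the equilateral reference triangle P1=(0,0), P2=(1,0), P3=(1/2,√3/2), for r=s∈(1/2,1) with t=1−s, let P4=P1+s(P2−P1), P5=P2+(1−s)(P3−P2), P6=P1+r(P3−P1). Then every interior angle of triangle P6P5P3 is bounded above by 120°. -/

import Mathlib

open EuclideanGeometry Real Set
open RealInnerProductSpace

private def vec (a b : ℝ) : EuclideanSpace ℝ (Fin 2) := !₂[a, b]

private lemma inner_vec (a b c d : ℝ) : ⟪vec a b, vec c d⟫ = a * c + b * d := by
  simp [vec, PiLp.inner_apply, Fin.sum_univ_two, mul_comm]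

private lemma norm_vec (a b : ℝ) : ‖vec a b‖ = Real.sqrt (a ^ 2 + b ^ 2) := by
  rw [EuclideanSpace.norm_eq]
  simp [vec, Fin.sum_univ_two, sq_abs]

private lemma arccos_le_two_pi_div_three {x : ℝ} (h : -(1/2) ≤ x) :
    Real.arccos x ≤ 2 * π / 3 := by
  have hc : Real.cos (2 * π / 3) = -(1/2) := by
    have h1 : (2 * π / 3 : ℝ) = π - π / 3 := by ring
    rw [h1, Real.cos_pi_sub, Real.cos_pi_div_three]
  have h2 : Real.arccos (-(1/2)) = 2 * π / 3 := by
    rw [← hc, Real.arccos_cos] <;> nlinarith [Real.pi_pos]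
  calc Real.arccos x ≤ Real.arccos (-(1/2)) := by
        unfold Real.arccos
        have := Real.monotone_arcsin h
        linarith
    _ = 2 * π / 3 := h2

private lemma angle_le_of_cos {x y : EuclideanSpace ℝ (Fin 2)}
    (h : -(1/2) ≤ ⟪x, y⟫ / (‖x‖ * ‖y‖)) :
    InnerProductGeometry.angle x y ≤ 2 * π / 3 := by
  rw [InnerProductGeometry.angle]
  exact arccos_le_two_pi_div_three h

set_option maxHeartbeats 1000000 in
theorem stmt_15
    (P1 P2 P3 : EuclideanSpace ℝ (Fin 2))
    (hP1 : P1 = !₂[0, 0]) (hP2 : P2 = !₂[1, 0]) (hP3 : P3 = !₂[1/2, Real.sqrt 3 / 2])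
    (s : ℝ) (hs : s ∈ Set.Ioo (1/2 : ℝ) 1)
    (P4 P5 P6 : EuclideanSpace ℝ (Fin 2))
    (hP4 : P4 = P1 + s • (P2 - P1))
    (hP5 : P5 = P2 + (1 - s) • (P3 - P2))
    (hP6 : P6 = P1 + s • (P3 - P1)) :
    ∠ P5 P6 P3 ≤ 2 * π / 3 ∧ ∠ P6 P5 P3 ≤ 2 * π / 3 ∧ ∠ P6 P3 P5 ≤ 2 * π / 3 := by
  obtain ⟨hs1, hs2⟩ := hs
  have h3 : Real.sqrt 3 ^ 2 = 3 := Real.sq_sqrt (by norm_num)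
  have hang : ∀ a b c : EuclideanSpace ℝ (Fin 2),
      ∠ a b c = InnerProductGeometry.angle (a - b) (c - b) := by
    intro a b c
    rw [EuclideanGeometry.angle, vsub_eq_sub, vsub_eq_sub]
  have comp : ∀ (x y : EuclideanSpace ℝ (Fin 2)) (a b : ℝ),
      x 0 - y 0 = a → x 1 - y 1 = b → x - y = vec a b := by
    intro x y a b h0 h1
    ext i
    fin_cases i
    · exact h0
    · exact h1
  have e1 : P5 - P6 = vec (1/2) ((1 - 2*s) * (Real.sqrt 3 / 2)) := by
    apply comp <;> rw [hP5, hP6, hP1, hP2, hP3] <;>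
      simp [PiLp.sub_apply, PiLp.add_apply, PiLp.smul_apply] <;> ring
  have e2 : P3 - P6 = vec ((1 - s)/2) ((1 - s) * (Real.sqrt 3 / 2)) := by
    apply comp <;> rw [hP6, hP1, hP3] <;>
      simp [PiLp.sub_apply, PiLp.add_apply, PiLp.smul_apply] <;> ring
  have e3 : P6 - P5 = vec (-(1/2)) ((2*s - 1) * (Real.sqrt 3 / 2)) := by
    apply comp <;> rw [hP5, hP6, hP1, hP2, hP3] <;>
      simp [PiLp.sub_apply, PiLp.add_apply, PiLp.smul_apply] <;> ring
  have e4 : P3 - P5 = vec (-(s/2)) (s * (Real.sqrt 3 / 2)) := by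
    apply comp <;> rw [hP5, hP2, hP3] <;>
      simp [PiLp.sub_apply, PiLp.add_apply, PiLp.smul_apply] <;> ring
  refine ⟨?_, ?_, ?_⟩
  · -- angle at P6
    rw [hang, e1, e2]
    apply angle_le_of_cos
    rw [inner_vec, norm_vec, norm_vec]
    have hA : (1/2 : ℝ)^2 + ((1 - 2*s) * (Real.sqrt 3 / 2))^2 = 3*s^2 - 3*s + 1 := by
      nlinarith [h3]
    have hB : ((1 - s)/2 : ℝ)^2 + ((1 - s) * (Real.sqrt 3 / 2))^2 = (1 - s)^2 := by
      nlinarith [h3]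
    rw [hA, hB, Real.sqrt_sq (by linarith : (0:ℝ) ≤ 1 - s)]
    have hI : (1/2 : ℝ) * ((1 - s)/2) + (1 - 2*s) * (Real.sqrt 3 / 2) * ((1 - s) * (Real.sqrt 3 / 2))
        = (1 - s) * (2 - 3*s) / 2 := by nlinarith [h3]
    rw [hI]
    have hq : (0:ℝ) < 3 * s ^ 2 - 3 * s + 1 := by nlinarith
    have hsq : (0:ℝ) < Real.sqrt (3 * s ^ 2 - 3 * s + 1) := Real.sqrt_pos.mpr hq
    have hN : (0:ℝ) < Real.sqrt (3 * s ^ 2 - 3 * s + 1) * (1 - s) :=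
      mul_pos hsq (by linarith)
    rw [le_div_iff₀ hN]
    have key : -(Real.sqrt (3 * s ^ 2 - 3 * s + 1)) ≤ 2 - 3 * s := by
      rcases le_or_gt (3 * s) 2 with h | h
      · have := Real.sqrt_nonneg (3 * s ^ 2 - 3 * s + 1)
        linarith
      · have h32 : (0:ℝ) ≤ 3 * s - 2 := by linarith
        have : 3 * s - 2 ≤ Real.sqrt (3 * s ^ 2 - 3 * s + 1) := by
          rw [show (3 * s - 2 : ℝ) = Real.sqrt ((3 * s - 2) ^ 2) from
            (Real.sqrt_sq h32).symm]
          apply Real.sqrt_le_sqrt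
          nlinarith
        linarith
    nlinarith [mul_le_mul_of_nonneg_left key (show (0:ℝ) ≤ 1 - s by linarith)]
  · -- angle at P5
    rw [hang, e3, e4]
    apply angle_le_of_cos
    have hnn : (0:ℝ) ≤ ⟪vec (-(1/2)) ((2*s - 1) * (Real.sqrt 3 / 2)),
        vec (-(s/2)) (s * (Real.sqrt 3 / 2))⟫ := by
      rw [inner_vec]
      have h33 : Real.sqrt 3 * Real.sqrt 3 = 3 := Real.mul_self_sqrt (by norm_num)
      have heq : -(1/2) * -(s/2) + (2*s - 1) * (Real.sqrt 3 / 2) * (s * (Real.sqrt 3 / 2))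
          = s * (6*s - 2) / 4 := by linear_combination (s * (2*s - 1) / 4) * h33
      rw [heq]
      nlinarith [hs1, hs2]
    have := div_nonneg hnn (mul_nonneg
      (norm_nonneg (vec (-(1/2)) ((2*s - 1) * (Real.sqrt 3 / 2))))
      (norm_nonneg (vec (-(s/2)) (s * (Real.sqrt 3 / 2)))))
    linarith
  · -- angle at P3
    have e5 : P6 - P3 = vec (-((1 - s)/2)) (-((1 - s) * (Real.sqrt 3 / 2))) := by
      apply comp <;> rw [hP6, hP1, hP3] <;>
        simp [PiLp.sub_apply, PiLp.add_apply, PiLp.smul_apply] <;> ring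
    have e6 : P5 - P3 = vec (s/2) (-(s * (Real.sqrt 3 / 2))) := by
      apply comp <;> rw [hP5, hP2, hP3] <;>
        simp [PiLp.sub_apply, PiLp.add_apply, PiLp.smul_apply] <;> ring
    rw [hang, e5, e6]
    apply angle_le_of_cos
    have hnn : (0:ℝ) ≤ ⟪vec (-((1 - s)/2)) (-((1 - s) * (Real.sqrt 3 / 2))),
        vec (s/2) (-(s * (Real.sqrt 3 / 2)))⟫ := by
      rw [inner_vec]
      have h33 : Real.sqrt 3 * Real.sqrt 3 = 3 := Real.mul_self_sqrt (by norm_num)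
      have heq : -((1 - s)/2) * (s/2) + -((1 - s) * (Real.sqrt 3 / 2)) * -(s * (Real.sqrt 3 / 2))
          = (1 - s) * s / 2 := by linear_combination ((1 - s) * s / 4) * h33
      rw [heq]
      nlinarith [hs1, hs2]
    have := div_nonneg hnn (mul_nonneg
      (norm_nonneg (vec (-((1 - s)/2)) (-((1 - s) * (Real.sqrt 3 / 2)))))
      (norm_nonneg (vec (s/2) (-(s * (Real.sqrt 3 / 2))))))
    linarith
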